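/- arXiv:1306.2166 — 4 statements merged into one kernel-verified Lean document; each statement's English description precedes it below -/
import Mathlib

section
/- McKean-Singer formula (algebraic form): If D is symmetric, P a symmetric involution with DP = -PD, and L = D^2, then for all t, tr(P exp(-tL)) = tr(P), i.e., the super trace of the heat kernel is constant in t. -/
lemma aux_odd_trace {n : ℕ} (D P : Matrix (Fin n) (Fin n) ℝ)
    (hanti : D * P + P * D = 0) (m : ℕ) :
    Matrix.trace (P * D ^ (m + 1)) = 0 := by
  have hPD : P * D = -(D * P) := eq_neg_of_add_eq_zero_right hanti
  have h : Matrix.trace (P * D ^ (m + 1)) = -Matrix.trace (P * D ^ (m + 1)) := by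
    calc Matrix.trace (P * D ^ (m + 1))
        = Matrix.trace ((P * D) * D ^ m) := by rw [pow_succ', ← mul_assoc]
      _ = -Matrix.trace (D * (P * D ^ m)) := by rw [hPD]; simp [mul_assoc]
      _ = -Matrix.trace ((P * D ^ m) * D) := by rw [Matrix.trace_mul_comm]
      _ = -Matrix.trace (P * D ^ (m + 1)) := by rw [pow_succ, mul_assoc]
  linarith

theorem stmt_4 {n : ℕ} (D P : Matrix (Fin n) (Fin n) ℝ)
    (hD : D.IsSymm) (hP : P.IsSymm) (hP2 : P * P = 1) (hanti : D * P + P * D = 0)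
    (L : Matrix (Fin n) (Fin n) ℝ) (hL : L = D ^ 2) (t : ℝ) :
    Matrix.trace (P * NormedSpace.exp (-(t • L))) = Matrix.trace P := by
  subst hL
  letI : SeminormedRing (Matrix (Fin n) (Fin n) ℝ) := Matrix.linftyOpSemiNormedRing
  letI : NormedRing (Matrix (Fin n) (Fin n) ℝ) := Matrix.linftyOpNormedRing
  letI : NormedAlgebra ℝ (Matrix (Fin n) (Fin n) ℝ) := Matrix.linftyOpNormedAlgebra
  set A : Matrix (Fin n) (Fin n) ℝ := -(t • D ^ 2) with hA
  have hsum : Summable (fun k : ℕ => ((Nat.factorial k : ℝ))⁻¹ • A ^ k) :=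
    NormedSpace.expSeries_summable' A
  let f : Matrix (Fin n) (Fin n) ℝ →ₗ[ℝ] ℝ :=
    (Matrix.traceLinearMap (Fin n) ℝ ℝ).comp (LinearMap.mulLeft ℝ P)
  have hf : Matrix.trace (P * NormedSpace.exp A) = f (NormedSpace.exp A) := rfl
  rw [hf, NormedSpace.exp_eq_tsum (𝕂 := ℝ)]
  have hmap : f (∑' k : ℕ, ((Nat.factorial k : ℝ))⁻¹ • A ^ k)
      = ∑' k : ℕ, f (((Nat.factorial k : ℝ))⁻¹ • A ^ k) := by
    simpa using (LinearMap.toContinuousLinearMap f).map_tsum hsum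
  rw [hmap]
  have hterm : ∀ k : ℕ, k ≠ 0 → f (((Nat.factorial k : ℝ))⁻¹ • A ^ k) = 0 := by
    intro k hk
    obtain ⟨m, rfl⟩ := Nat.exists_eq_succ_of_ne_zero hk
    have hAk : A ^ (m + 1) = (-t) ^ (m + 1) • (D ^ 2) ^ (m + 1) := by
      rw [hA, ← smul_pow]; congr 1; rw [neg_smul]
    have h2 : (D ^ 2) ^ (m + 1) = D ^ (2 * m + 1 + 1) := by
      rw [← pow_mul]; ring_nf
    simp only [f, LinearMap.comp_apply, LinearMap.mulLeft_apply,
      Matrix.traceLinearMap_apply, hAk, h2, Matrix.mul_smul, Matrix.trace_smul,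
      map_smul, aux_odd_trace D P hanti (2 * m + 1)]
    simp
  rw [tsum_eq_single 0 hterm]
  simp [f]
end

section
/- If D is symmetric, P is a symmetric involution with DP = -PD, and f is an analytic (entire) function with f(0) = 0, then tr(P exp(f(D))) = tr(P). -/
open NormedSpace

/-- An entire function `f` with `f 0 = 0` is represented by an everywhere
convergent power series with zero constant coefficient; `f(D)` is the sum
`∑' k, c k • D ^ k` of that series applied to the matrix `D`. -/
theorem stmt_5 {n : ℕ} (D P : Matrix (Fin n) (Fin n) ℝ)
    (hD : D.IsSymm) (hP : P.IsSymm) (hP2 : P * P = 1) (hanti : D * P + P * D = 0)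
    (c : ℕ → ℝ) (hc0 : c 0 = 0)
    (hconv : Summable (fun k => c k • D ^ k)) :
    Matrix.trace (P * NormedSpace.exp (∑' k, c k • D ^ k)) = Matrix.trace P := by
  set A : Matrix (Fin n) (Fin n) ℝ := ∑' k, c k • D ^ k with hA
  have hPD : P * D = -(D * P) := eq_neg_of_add_eq_zero_right hanti
  -- a convenient continuous linear map builder
  have toCLM : ∀ (φ : Matrix (Fin n) (Fin n) ℝ →ₗ[ℝ] Matrix (Fin n) (Fin n) ℝ),
      Continuous φ := fun φ => φ.continuous_of_finiteDimensional
  -- D commutes with A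
  have hDA : Commute D A := by
    have hl : D * A = ∑' k, c k • (D * D ^ k) := by
      exact ((LinearMap.mulLeft ℝ D).toContinuousLinearMap.map_tsum hconv).trans
        (by simp [LinearMap.mulLeft_apply, Matrix.mul_smul])
    have hr : A * D = ∑' k, c k • (D ^ k * D) := by
      exact ((LinearMap.mulRight ℝ D).toContinuousLinearMap.map_tsum hconv).trans
        (by simp [LinearMap.mulRight_apply, Matrix.smul_mul])
    rw [Commute, SemiconjBy, hl, hr]
    congr 1
    funext k
    rw [← pow_succ, ← pow_succ']
  -- key cancellation: trace (P * (D * M)) = 0 when D commutes with M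
  have key : ∀ M : Matrix (Fin n) (Fin n) ℝ, D * M = M * D →
      Matrix.trace (P * (D * M)) = 0 := by
    intro M hM
    have h1 : Matrix.trace (P * (D * M)) = -Matrix.trace (D * (P * M)) := by
      rw [← mul_assoc, hPD, neg_mul, mul_assoc, Matrix.trace_neg]
    have h2 : Matrix.trace (D * (P * M)) = Matrix.trace (P * (D * M)) := by
      rw [Matrix.trace_mul_comm, mul_assoc, ← hM]
    rw [h2] at h1
    linarith
  -- trace (P * (A * M)) = 0 when D commutes with M
  have key2 : ∀ M : Matrix (Fin n) (Fin n) ℝ, D * M = M * D →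
      Matrix.trace (P * (A * M)) = 0 := by
    intro M hM
    -- the linear functional X ↦ trace (P * (X * M))
    let ψ : Matrix (Fin n) (Fin n) ℝ →ₗ[ℝ] ℝ :=
      { toFun := fun X => Matrix.trace (P * (X * M))
        map_add' := fun X Y => by
          simp [Matrix.add_mul, Matrix.mul_add]
        map_smul' := fun r X => by
          simp [Matrix.smul_mul, Matrix.mul_smul] }
    have hψ : Matrix.trace (P * (A * M)) = ∑' k, ψ (c k • D ^ k) :=
      (ψ.toContinuousLinearMap.map_tsum hconv)
    rw [hψ]
    have hz : ∀ k, ψ (c k • D ^ k) = 0 := by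
      intro k
      have : ψ (c k • D ^ k) = c k * Matrix.trace (P * (D ^ k * M)) := by
        simp [ψ, Matrix.smul_mul, Matrix.mul_smul]
      rw [this]
      rcases Nat.eq_zero_or_pos k with hk | hk
      · simp [hk, hc0]
      · obtain ⟨j, rfl⟩ : ∃ j, k = j + 1 := ⟨k - 1, (Nat.succ_pred_eq_of_pos hk).symm⟩
        have hcomm : D * (D ^ j * M) = (D ^ j * M) * D :=
          (((Commute.refl D).pow_right j).mul_right hM).eq
        rw [pow_succ', mul_assoc, key _ hcomm, mul_zero]
    simp [hz]
  -- trace (P * A ^ m) vanishes for m ≥ 1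
  have hpow : ∀ m : ℕ, m ≠ 0 → Matrix.trace (P * A ^ m) = 0 := by
    intro m hm
    obtain ⟨j, rfl⟩ : ∃ j, m = j + 1 := ⟨m - 1, (Nat.succ_pred_eq_of_pos (Nat.pos_of_ne_zero hm)).symm⟩
    have hDAj : D * A ^ j = A ^ j * D := (hDA.pow_right j).eq
    have := key2 (A ^ j) hDAj
    rwa [pow_succ']
  -- expand the exponential
  letI : SeminormedRing (Matrix (Fin n) (Fin n) ℝ) := Matrix.linftyOpSemiNormedRing
  letI : NormedRing (Matrix (Fin n) (Fin n) ℝ) := Matrix.linftyOpNormedRing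
  letI : NormedAlgebra ℝ (Matrix (Fin n) (Fin n) ℝ) := Matrix.linftyOpNormedAlgebra
  have hexp : NormedSpace.exp A = ∑' m : ℕ, ((m.factorial : ℝ)⁻¹) • A ^ m := by
    rw [NormedSpace.exp_eq_tsum (𝕂 := ℝ)]
  have hsum : Summable fun m : ℕ => ((m.factorial : ℝ)⁻¹) • A ^ m :=
    NormedSpace.expSeries_summable' (𝕂 := ℝ) A
  let χ : Matrix (Fin n) (Fin n) ℝ →ₗ[ℝ] ℝ :=
    { toFun := fun X => Matrix.trace (P * X)
      map_add' := fun X Y => by simp [Matrix.mul_add]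
      map_smul' := fun r X => by simp [Matrix.mul_smul] }
  have : Matrix.trace (P * NormedSpace.exp A) = ∑' m : ℕ, χ (((m.factorial : ℝ)⁻¹) • A ^ m) := by
    rw [hexp]
    exact χ.toContinuousLinearMap.map_tsum hsum
  rw [this, tsum_eq_single 0]
  · simp [χ]
  · intro m hm
    simp [χ, Matrix.mul_smul, hpow m hm]
end

section
/- Lidskii-type inequality: If A and B are real symmetric n×n matrices with eigenvalues α_1 ≤ ... ≤ α_n and β_1 ≤ ... ≤ β_n respectively, then Σ_j |α_j - β_j| ≤ Σ_{i,j} |(A-B)_{ij}|. -/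
open Polynomial Matrix Finset RealInnerProductSpace

namespace Lid

variable {n : ℕ}



lemma charpoly_conj (U D : Matrix (Fin n) (Fin n) ℝ) (hU : U ∈ Matrix.unitaryGroup (Fin n) ℝ) :
    (U * D * star U).charpoly = D.charpoly := by
  have h1 : star U * U = 1 := (Matrix.mem_unitaryGroup_iff').mp hU
  have h2 : U * star U = 1 := (Matrix.mem_unitaryGroup_iff).mp hU
  unfold Matrix.charpoly
  have key : charmatrix (U * D * star U) =
      (U.map C) * charmatrix D * ((star U).map C) := by
    unfold charmatrix
    rw [Matrix.mul_sub, Matrix.sub_mul]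
    congr 1
    · have hsc : (Matrix.scalar (Fin n)) (X : ℝ[X]) = (X : ℝ[X]) • (1 : Matrix (Fin n) (Fin n) ℝ[X]) := by
        ext i j
        simp [Matrix.scalar, Matrix.smul_eq_diagonal_mul, Matrix.diagonal, Matrix.one_apply]
      rw [hsc, Matrix.mul_smul, Matrix.smul_mul, Matrix.mul_one]
      have : (U.map C) * ((star U).map C) = 1 := by
        have := congrArg (fun (M : Matrix (Fin n) (Fin n) ℝ) => M.map C) h2
        simpa [Matrix.map_mul] using this
      rw [this]
    · show C.mapMatrix (U * D * star U) = _
      simp [_root_.map_mul]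
  rw [key, Matrix.det_mul, Matrix.det_mul, mul_comm, ← mul_assoc, ← Matrix.det_mul,
    ← Matrix.map_mul, h1]
  simp [Matrix.charpoly]

lemma charpoly_diagonal (d : Fin n → ℝ) :
    (Matrix.diagonal d).charpoly = ∏ i, (X - C (d i)) := by
  rw [Matrix.charpoly_of_upperTriangular _ (Matrix.blockTriangular_diagonal d)]
  simp [Matrix.diagonal]

lemma charpoly_eq_prod {M : Matrix (Fin n) (Fin n) ℝ} (hM : M.IsHermitian) :
    M.charpoly = ∏ i, (X - C (hM.eigenvalues i)) := by
  conv_lhs => rw [hM.spectral_theorem, Unitary.conjStarAlgAut_apply]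
  rw [charpoly_conj _ _ (hM.eigenvectorUnitary).2]
  have : (RCLike.ofReal ∘ hM.eigenvalues : Fin n → ℝ) = hM.eigenvalues := by
    ext i; simp
  rw [this, charpoly_diagonal]




/-- Two monotone tuples with the same product ∏ (X - C ·) are equal. -/
lemma monotone_unique {α β : Fin n → ℝ} (hα : Monotone α) (hβ : Monotone β)
    (h : ∏ i, (X - C (α i)) = ∏ i, (X - C (β i))) : α = β := by
  have hm : (Finset.univ.val.map α) = (Finset.univ.val.map β) := by
    have h1 : ((Finset.univ.val.map α).map fun a => X - C a).prod
        = ((Finset.univ.val.map β).map fun a => X - C a).prod := by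
      simpa [Multiset.map_map, Finset.prod_eq_multiset_prod, Function.comp_def] using h
    have := congrArg Polynomial.roots h1
    rwa [roots_multiset_prod_X_sub_C, roots_multiset_prod_X_sub_C] at this
  rw [Fin.univ_val_map, Fin.univ_val_map] at hm
  have hperm : (List.ofFn α).Perm (List.ofFn β) := Multiset.coe_eq_coe.mp hm
  exact List.ofFn_injective
    (List.Perm.eq_of_sortedLE hα.sortedLE_ofFn hβ.sortedLE_ofFn hperm)

/-- sorted eigenvalues -/
noncomputable def sortEig {M : Matrix (Fin n) (Fin n) ℝ} (hM : M.IsHermitian) : Fin n → ℝ :=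
  hM.eigenvalues ∘ Tuple.sort hM.eigenvalues

lemma sortEig_monotone {M : Matrix (Fin n) (Fin n) ℝ} (hM : M.IsHermitian) :
    Monotone (sortEig hM) := Tuple.monotone_sort _

lemma charpoly_eq_prod_sortEig {M : Matrix (Fin n) (Fin n) ℝ} (hM : M.IsHermitian) :
    M.charpoly = ∏ i, (X - C (sortEig hM i)) := by
  rw [charpoly_eq_prod hM, sortEig]
  exact (Fintype.prod_equiv (Tuple.sort hM.eigenvalues) _ _ (fun i => rfl)).symm

lemma eq_sortEig {M : Matrix (Fin n) (Fin n) ℝ} (hM : M.IsHermitian) {α : Fin n → ℝ}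
    (hα : Monotone α) (h : M.charpoly = ∏ i, (X - C (α i))) : α = sortEig hM :=
  monotone_unique hα (sortEig_monotone hM) (by rw [← h, charpoly_eq_prod_sortEig hM])




lemma inner_toEuclideanLin (M : Matrix (Fin n) (Fin n) ℝ) (x : EuclideanSpace ℝ (Fin n)) :
    ⟪x, Matrix.toEuclideanLin M x⟫ =
      dotProduct (WithLp.equiv 2 (Fin n → ℝ) x) (M *ᵥ (WithLp.equiv 2 (Fin n → ℝ) x)) := by
  rw [toEuclideanLin_apply, PiLp.inner_apply]
  simp [dotProduct]
  exact Finset.sum_congr rfl fun _ _ => mul_comm _ _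

lemma quad_eq_sum {M : Matrix (Fin n) (Fin n) ℝ} (hM : M.IsHermitian)
    (x : EuclideanSpace ℝ (Fin n)) :
    ⟪x, Matrix.toEuclideanLin M x⟫
      = ∑ i, hM.eigenvalues i * (hM.eigenvectorBasis.repr x i)^2 := by
  set u := hM.eigenvectorBasis with hu
  have hTu : ∀ i, Matrix.toEuclideanLin M (u i) = hM.eigenvalues i • u i := by
    intro i
    apply (WithLp.equiv 2 (Fin n → ℝ)).injective
    simpa [toEuclideanLin_apply] using hM.mulVec_eigenvectorBasis i
  have hx : Matrix.toEuclideanLin M x = ∑ i, (hM.eigenvalues i * u.repr x i) • u i := by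
    conv_lhs => rw [← u.sum_repr x, map_sum]
    refine Finset.sum_congr rfl fun i _ => ?_
    rw [_root_.map_smul, hTu, smul_smul, mul_comm]
  rw [hx, inner_sum]
  refine Finset.sum_congr rfl fun i _ => ?_
  rw [real_inner_smul_right, real_inner_comm, ← u.repr_apply_apply]
  ring

lemma normsq_eq_sum (u : OrthonormalBasis (Fin n) ℝ (EuclideanSpace ℝ (Fin n)))
    (x : EuclideanSpace ℝ (Fin n)) :
    ⟪x, x⟫ = ∑ i, (u.repr x i)^2 := by
  rw [← u.repr.inner_map_map x x, PiLp.inner_apply]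
  simp [pow_two]

lemma repr_zero_of_mem_span (u : OrthonormalBasis (Fin n) ℝ (EuclideanSpace ℝ (Fin n)))
    (S : Set (Fin n)) {x : EuclideanSpace ℝ (Fin n)}
    (hx : x ∈ Submodule.span ℝ (u '' S)) {i : Fin n} (hi : i ∉ S) :
    u.repr x i = 0 := by
  rw [u.repr_apply_apply]
  induction hx using Submodule.span_induction with
  | mem y hy =>
      obtain ⟨k, hk, rfl⟩ := hy
      exact u.orthonormal.2 (fun h => hi (h ▸ hk))
  | zero => simp
  | add y z _ _ hy hz => rw [inner_add_right, hy, hz, add_zero]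
  | smul c y _ hy => rw [real_inner_smul_right, hy, mul_zero]













lemma finrank_span_image (u : OrthonormalBasis (Fin n) ℝ (EuclideanSpace ℝ (Fin n)))
    (σ : Equiv.Perm (Fin n)) (S : Set (Fin n)) [Fintype S] :
    Module.finrank ℝ (Submodule.span ℝ (u '' (σ '' S))) = Fintype.card S := by
  have hr : u '' (σ '' S) = Set.range (fun k : S => u (σ k)) := by
    ext y
    constructor
    · rintro ⟨a, ⟨b, hb, rfl⟩, rfl⟩; exact ⟨⟨b, hb⟩, rfl⟩
    · rintro ⟨⟨b, hb⟩, rfl⟩; exact ⟨σ b, ⟨b, hb, rfl⟩, rfl⟩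
  rw [hr]
  exact finrank_span_eq_card
    ((u.orthonormal.comp (fun k : S => σ k)
      (σ.injective.comp Subtype.val_injective)).linearIndependent)

/-- Weyl monotonicity -/
lemma weyl {M N : Matrix (Fin n) (Fin n) ℝ} (hM : M.IsHermitian) (hN : N.IsHermitian)
    (h : (N - M).PosSemidef) (j : Fin n) : sortEig hM j ≤ sortEig hN j := by
  classical
  set u := hM.eigenvectorBasis with hu
  set v := hN.eigenvectorBasis with hv
  set σ := Tuple.sort hM.eigenvalues with hσ
  set τ := Tuple.sort hN.eigenvalues with hτ
  set V := Submodule.span ℝ (u '' (σ '' (Set.Ici j))) with hV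
  set W := Submodule.span ℝ (v '' (τ '' (Set.Iic j))) with hW
  have hVd : Module.finrank ℝ V = n - (j : ℕ) := by
    rw [hV, finrank_span_image, Fintype.card_Ici, Fin.card_Ici]
  have hWd : Module.finrank ℝ W = (j : ℕ) + 1 := by
    rw [hW, finrank_span_image, Fintype.card_Iic, Fin.card_Iic]
  have hinf : V ⊓ W ≠ ⊥ := by
    intro hc
    have hs := Submodule.finrank_sup_add_finrank_inf_eq V W
    rw [hc, finrank_bot, hVd, hWd] at hs
    have hle : Module.finrank ℝ (V ⊔ W : Submodule ℝ (EuclideanSpace ℝ (Fin n))) ≤ n := by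
      have := Submodule.finrank_le (V ⊔ W)
      rwa [finrank_euclideanSpace_fin] at this
    have := j.isLt
    omega
  obtain ⟨x, hxm, hx0⟩ := (Submodule.ne_bot_iff _).mp hinf
  have hxV : x ∈ V := hxm.1
  have hxW : x ∈ W := hxm.2
  have hposn : (0:ℝ) < ⟪x, x⟫ := by
    rw [real_inner_self_eq_norm_sq]
    have : 0 < ‖x‖ := norm_pos_iff.mpr hx0
    positivity
  -- lower bound for M
  have hMx : sortEig hM j * ⟪x, x⟫ ≤ ⟪x, Matrix.toEuclideanLin M x⟫ := by
    rw [quad_eq_sum hM, normsq_eq_sum u,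
      ← Equiv.sum_comp σ (fun i => hM.eigenvalues i * (u.repr x i)^2),
      ← Equiv.sum_comp σ (fun i => (u.repr x i)^2), Finset.mul_sum]
    apply Finset.sum_le_sum
    intro k _
    by_cases hk : j ≤ k
    · have : hM.eigenvalues (σ j) ≤ hM.eigenvalues (σ k) := by
        have := Tuple.monotone_sort hM.eigenvalues hk
        simpa using this
      exact mul_le_mul_of_nonneg_right this (sq_nonneg _)
    · have hz : u.repr x (σ k) = 0 := by
        refine repr_zero_of_mem_span u _ hxV ?_
        rintro ⟨k', hk', hkk⟩
        exact hk (σ.injective hkk ▸ hk')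
      simp [hz]
  -- upper bound for N
  have hNx : ⟪x, Matrix.toEuclideanLin N x⟫ ≤ sortEig hN j * ⟪x, x⟫ := by
    rw [quad_eq_sum hN, normsq_eq_sum v,
      ← Equiv.sum_comp τ (fun i => hN.eigenvalues i * (v.repr x i)^2),
      ← Equiv.sum_comp τ (fun i => (v.repr x i)^2), Finset.mul_sum]
    apply Finset.sum_le_sum
    intro k _
    by_cases hk : k ≤ j
    · have : hN.eigenvalues (τ k) ≤ hN.eigenvalues (τ j) := by
        have := Tuple.monotone_sort hN.eigenvalues hk
        simpa using this
      exact mul_le_mul_of_nonneg_right this (sq_nonneg _)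
    · have hz : v.repr x (τ k) = 0 := by
        refine repr_zero_of_mem_span v _ hxW ?_
        rintro ⟨k', hk', hkk⟩
        exact hk (τ.injective hkk ▸ hk')
      simp [hz]
  -- M ≤ N on the quadratic form
  have hMN : ⟪x, Matrix.toEuclideanLin M x⟫ ≤ ⟪x, Matrix.toEuclideanLin N x⟫ := by
    have h0 := h.dotProduct_mulVec_nonneg (WithLp.equiv 2 (Fin n → ℝ) x)
    rw [star_trivial] at h0
    have hsub : Matrix.toEuclideanLin (N - M) x
        = Matrix.toEuclideanLin N x - Matrix.toEuclideanLin M x := by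
      rw [map_sub]; rfl
    have := inner_toEuclideanLin (N - M) x
    rw [hsub, inner_sub_right] at this
    linarith [h0, this.ge, this.le]
  have := hMx.trans (hMN.trans hNx)
  exact le_of_mul_le_mul_right (by linarith) hposn





lemma conj_spectral (M : Matrix (Fin n) (Fin n) ℝ) (hM : M.IsHermitian) :
    M = (hM.eigenvectorUnitary : Matrix (Fin n) (Fin n) ℝ) * diagonal hM.eigenvalues
      * star (hM.eigenvectorUnitary : Matrix (Fin n) (Fin n) ℝ) := by
  conv_lhs => rw [hM.spectral_theorem]
  congr 1

lemma trace_conj (U : Matrix (Fin n) (Fin n) ℝ) (hU : U ∈ Matrix.unitaryGroup (Fin n) ℝ)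
    (D : Matrix (Fin n) (Fin n) ℝ) : (U * D * star U).trace = D.trace := by
  rw [Matrix.trace_mul_cycle, (Matrix.mem_unitaryGroup_iff').mp hU, one_mul]

lemma trace_eq_sum_eig {M : Matrix (Fin n) (Fin n) ℝ} (hM : M.IsHermitian) :
    M.trace = ∑ i, hM.eigenvalues i := by
  conv_lhs => rw [conj_spectral M hM]
  rw [trace_conj _ (hM.eigenvectorUnitary).2, Matrix.trace_diagonal]

lemma trace_eq_sum_sortEig {M : Matrix (Fin n) (Fin n) ℝ} (hM : M.IsHermitian) :
    M.trace = ∑ i, sortEig hM i := by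
  rw [trace_eq_sum_eig hM, sortEig]
  exact (Equiv.sum_comp (Tuple.sort hM.eigenvalues) hM.eigenvalues).symm

/-- Positive part of a symmetric matrix. -/
noncomputable def posPart {D : Matrix (Fin n) (Fin n) ℝ} (hD : D.IsHermitian) :
    Matrix (Fin n) (Fin n) ℝ :=
  (hD.eigenvectorUnitary : Matrix (Fin n) (Fin n) ℝ)
    * diagonal (fun i => max (hD.eigenvalues i) 0)
    * star (hD.eigenvectorUnitary : Matrix (Fin n) (Fin n) ℝ)

lemma posPart_posSemidef {D : Matrix (Fin n) (Fin n) ℝ} (hD : D.IsHermitian) :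
    (posPart hD).PosSemidef := by
  rw [posPart, Matrix.star_eq_conjTranspose]
  exact (Matrix.PosSemidef.diagonal (fun i => le_max_right _ _)).mul_mul_conjTranspose_same _

lemma posPart_sub_posSemidef {D : Matrix (Fin n) (Fin n) ℝ} (hD : D.IsHermitian) :
    (posPart hD - D).PosSemidef := by
  have key : posPart hD - D = (hD.eigenvectorUnitary : Matrix (Fin n) (Fin n) ℝ)
      * diagonal (fun i => max (hD.eigenvalues i) 0 - hD.eigenvalues i)
      * star (hD.eigenvectorUnitary : Matrix (Fin n) (Fin n) ℝ) := by
    rw [posPart,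
      (Matrix.diagonal_sub (fun i => max (hD.eigenvalues i) 0) hD.eigenvalues).symm,
      Matrix.mul_sub, Matrix.sub_mul]
    congr 1
    exact conj_spectral D hD
  rw [key, Matrix.star_eq_conjTranspose]
  refine (Matrix.PosSemidef.diagonal ?_).mul_mul_conjTranspose_same _
  intro i
  simpa using sub_nonneg.mpr (le_max_left (hD.eigenvalues i) 0)

lemma trace_posPart_bound {D : Matrix (Fin n) (Fin n) ℝ} (hD : D.IsHermitian) :
    2 * (posPart hD).trace - D.trace = ∑ i, |hD.eigenvalues i| := by
  rw [posPart, trace_conj _ (hD.eigenvectorUnitary).2, Matrix.trace_diagonal,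
    trace_eq_sum_eig hD, Finset.mul_sum, ← Finset.sum_sub_distrib]
  refine Finset.sum_congr rfl fun i _ => ?_
  rcases le_or_gt (hD.eigenvalues i) 0 with h | h
  · rw [max_eq_right h, abs_of_nonpos h]; ring
  · rw [max_eq_left h.le, abs_of_pos h]; ring




lemma sum_abs_eig_le {D : Matrix (Fin n) (Fin n) ℝ} (hD : D.IsHermitian) :
    ∑ i, |hD.eigenvalues i| ≤ ∑ a, ∑ b, |D a b| := by
  classical
  set w : Fin n → Fin n → ℝ := fun i => ⇑(hD.eigenvectorBasis i) with hw
  -- eigenvalue as quadratic form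
  have heig : ∀ i, hD.eigenvalues i = ∑ a, ∑ b, w i a * (D a b * w i b) := by
    intro i
    rw [hD.eigenvalues_eq i]
    simp only [RCLike.re_to_real, dotProduct, mulVec, Pi.star_apply, star_trivial]
    exact Finset.sum_congr rfl fun a _ => by rw [Finset.mul_sum]
  -- rows of the unitary are unit vectors
  have hrow : ∀ a, ∑ i, (w i a)^2 = 1 := by
    intro a
    have h1 : ((hD.eigenvectorUnitary : Matrix (Fin n) (Fin n) ℝ)
        * star (hD.eigenvectorUnitary : Matrix (Fin n) (Fin n) ℝ)) a a = 1 := by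
      rw [(Matrix.mem_unitaryGroup_iff).mp (hD.eigenvectorUnitary).2]
      simp
    rw [Matrix.mul_apply] at h1
    calc ∑ i, (w i a)^2
        = ∑ i, (hD.eigenvectorUnitary : Matrix (Fin n) (Fin n) ℝ) a i
          * star (hD.eigenvectorUnitary : Matrix (Fin n) (Fin n) ℝ) i a := by
          refine Finset.sum_congr rfl fun i _ => ?_
          simp [pow_two, Matrix.star_apply, hw]
      _ = 1 := h1
  have hcs : ∀ a b, ∑ i, |w i a| * |w i b| ≤ 1 := by
    intro a b
    have h1 : (∑ i, |w i a| * |w i b|)^2 ≤ 1 := by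
      have := Finset.sum_mul_sq_le_sq_mul_sq Finset.univ (fun i => |w i a|) (fun i => |w i b|)
      simpa [sq_abs, hrow a, hrow b] using this
    have h2 : (0:ℝ) ≤ ∑ i, |w i a| * |w i b| :=
      Finset.sum_nonneg fun i _ => mul_nonneg (abs_nonneg _) (abs_nonneg _)
    nlinarith
  calc ∑ i, |hD.eigenvalues i|
      ≤ ∑ i, ∑ a, ∑ b, |D a b| * (|w i a| * |w i b|) := by
        refine Finset.sum_le_sum fun i _ => ?_
        rw [heig i]
        refine (Finset.abs_sum_le_sum_abs _ _).trans ?_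
        refine Finset.sum_le_sum fun a _ => ?_
        refine (Finset.abs_sum_le_sum_abs _ _).trans ?_
        refine Finset.sum_le_sum fun b _ => ?_
        rw [abs_mul, abs_mul]
        ring_nf
        exact le_refl _
    _ = ∑ a, ∑ b, |D a b| * (∑ i, |w i a| * |w i b|) := by
        rw [Finset.sum_comm]
        refine Finset.sum_congr rfl fun a _ => ?_
        rw [Finset.sum_comm]
        refine Finset.sum_congr rfl fun b _ => ?_
        rw [Finset.mul_sum]
    _ ≤ ∑ a, ∑ b, |D a b| * 1 := by
        refine Finset.sum_le_sum fun a _ => Finset.sum_le_sum fun b _ => ?_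
        exact mul_le_mul_of_nonneg_left (hcs a b) (abs_nonneg _)
    _ = ∑ a, ∑ b, |D a b| := by simp


end Lid

open Polynomial

/-- Lidskii-type inequality: eigenvalues (with multiplicity, in increasing order,
encoded through the characteristic polynomials) of symmetric `A, B` satisfy
`Σ|αⱼ - βⱼ| ≤ Σᵢⱼ |(A-B)ᵢⱼ|`. -/
theorem stmt_11 {n : ℕ} (A B : Matrix (Fin n) (Fin n) ℝ)
    (hA : A.IsSymm) (hB : B.IsSymm)
    (α β : Fin n → ℝ) (hαm : Monotone α) (hβm : Monotone β)
    (hAchar : A.charpoly = ∏ i, (X - C (α i)))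
    (hBchar : B.charpoly = ∏ i, (X - C (β i))) :
    ∑ j, |α j - β j| ≤ ∑ i, ∑ j, |(A - B) i j| := by
  classical
  have hAH : A.IsHermitian := by
    rwa [Matrix.IsHermitian, Matrix.conjTranspose_eq_transpose_of_trivial]
  have hBH : B.IsHermitian := by
    rwa [Matrix.IsHermitian, Matrix.conjTranspose_eq_transpose_of_trivial]
  have hα : α = Lid.sortEig hAH := Lid.eq_sortEig hAH hαm hAchar
  have hβ : β = Lid.sortEig hBH := Lid.eq_sortEig hBH hβm hBchar
  have hDH : (A - B).IsHermitian := hAH.sub hBH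
  set P := Lid.posPart hDH with hP
  have hPps := Lid.posPart_posSemidef hDH
  have hA'H : (B + P).IsHermitian := hBH.add hPps.1
  have h1 : ∀ j, α j ≤ Lid.sortEig hA'H j := by
    intro j
    rw [hα]
    refine Lid.weyl hAH hA'H ?_ j
    have he : B + P - A = P - (A - B) := by abel
    rw [he]
    exact Lid.posPart_sub_posSemidef hDH
  have h2 : ∀ j, β j ≤ Lid.sortEig hA'H j := by
    intro j
    rw [hβ]
    refine Lid.weyl hBH hA'H ?_ j
    have he : B + P - B = P := by abel
    rw [he]
    exact hPps
  calc ∑ j, |α j - β j|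
      ≤ ∑ j, (2 * Lid.sortEig hA'H j - α j - β j) := by
        refine Finset.sum_le_sum fun j _ => ?_
        rw [abs_sub_le_iff]
        constructor <;> [linarith [h2 j, h1 j]; linarith [h1 j, h2 j]]
    _ = 2 * (B + P).trace - A.trace - B.trace := by
        rw [Finset.sum_sub_distrib, Finset.sum_sub_distrib, ← Finset.mul_sum,
          ← Lid.trace_eq_sum_sortEig hA'H, hα, hβ,
          ← Lid.trace_eq_sum_sortEig hAH, ← Lid.trace_eq_sum_sortEig hBH]
    _ = 2 * P.trace - (A - B).trace := by
        rw [Matrix.trace_add, Matrix.trace_sub]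
        ring
    _ = ∑ i, |hDH.eigenvalues i| := Lid.trace_posPart_bound hDH
    _ ≤ ∑ i, ∑ j, |(A - B) i j| := Lid.sum_abs_eig_le hDH
end

section
/- Pythagoras theorem for pseudo determinants: If A is a real symmetric n×n matrix of rank k, then Det(A)^2 = Σ_P det(A_P)^2, where Det(A) is the product of the nonzero eigenvalues of A and the sum is over all k×k submatrices A_P of A obtained by choosing any k rows and any k columns. -/
open scoped Classical
open Matrix

lemma sm_unique {k n : ℕ} {f g : Fin k → Fin n} (hf : StrictMono f) (hg : StrictMono g)
    (h : Finset.univ.image f = Finset.univ.image g) : f = g := by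
  have hc : (Finset.univ.image f).card = k := by
    rw [Finset.card_image_of_injective _ hf.injective, Finset.card_univ, Fintype.card_fin]
  have h1 := Finset.orderEmbOfFin_unique hc (f := f)
    (fun x => Finset.mem_image_of_mem _ (Finset.mem_univ x)) hf
  have h2 := Finset.orderEmbOfFin_unique hc (f := g)
    (fun x => h ▸ Finset.mem_image_of_mem _ (Finset.mem_univ x)) hg
  rw [h1, h2]

lemma img_comp_perm {k n : ℕ} (g : Fin k → Fin n) (e : Equiv.Perm (Fin k)) :
    Finset.univ.image (g ∘ e) = Finset.univ.image g := by
  rw [← Finset.image_image, Finset.image_univ_equiv]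

lemma sum_inj_factor {k n : ℕ} {M : Type*} [AddCommMonoid M] (F : (Fin k → Fin n) → M) :
    ∑ φ ∈ Finset.univ.filter (fun φ : Fin k → Fin n => Function.Injective φ), F φ
      = ∑ f ∈ Finset.univ.filter (fun f : Fin k → Fin n => StrictMono f),
          ∑ σ : Equiv.Perm (Fin k), F (f ∘ σ) := by
  rw [← Finset.sum_product']
  refine (Finset.sum_nbij' (fun φ => (φ ∘ Tuple.sort φ, (Tuple.sort φ)⁻¹))
    (fun p => p.1 ∘ p.2) ?_ ?_ ?_ ?_ ?_).symm.symm
  · intro φ hφ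
    have hinj : Function.Injective φ := by simpa using hφ
    have hsm : StrictMono (φ ∘ Tuple.sort φ) :=
      (Tuple.monotone_sort φ).strictMono_of_injective (hinj.comp (Equiv.injective _))
    simp [Finset.mem_product, hsm]
  · intro p hp
    simp only [Finset.mem_product, Finset.mem_filter] at hp
    have : Function.Injective (p.1 ∘ p.2) := hp.1.2.injective.comp (Equiv.injective _)
    simpa using this
  · intro φ hφ
    funext i
    simp
  · intro p hp
    simp only [Finset.mem_product, Finset.mem_filter] at hp
    obtain ⟨⟨-, hsm⟩, -⟩ := hp
    set φ := p.1 ∘ p.2 with hφdef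
    set τ := Tuple.sort φ with hτ
    have hinj : Function.Injective φ := hsm.injective.comp (Equiv.injective _)
    have hsm2 : StrictMono (φ ∘ τ) :=
      (Tuple.monotone_sort φ).strictMono_of_injective (hinj.comp (Equiv.injective _))
    have himg : Finset.univ.image (φ ∘ τ) = Finset.univ.image p.1 := by
      rw [img_comp_perm φ τ, hφdef, img_comp_perm]
    have heq : φ ∘ τ = p.1 := sm_unique hsm2 hsm himg
    have hσ : τ⁻¹ = p.2 := by
      have hpt : ∀ j, p.2 (τ j) = j := fun j => hsm.injective (congrFun heq j)
      ext i
      have := hpt (τ⁻¹ i)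
      rw [← Equiv.Perm.mul_apply τ τ⁻¹ i, mul_inv_cancel, Equiv.Perm.one_apply] at this
      exact congrArg Fin.val this.symm
    exact Prod.ext heq hσ
  · intro φ hφ
    congr 1
    funext i
    simp

lemma det_mul_expand {k n : ℕ} (B : Matrix (Fin k) (Fin n) ℝ) (C : Matrix (Fin n) (Fin k) ℝ) :
    (B * C).det = ∑ φ : Fin k → Fin n, (∏ i, B i (φ i)) * (C.submatrix φ id).det := by
  have h1 : (B * C) = Matrix.of fun i => ∑ x, B i x • C x := by
    ext i j; simp [Matrix.mul_apply]
  rw [h1]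
  have h2 : (Matrix.of fun i => ∑ x, B i x • C x).det
      = Matrix.detRowAlternating (fun i => ∑ x, B i x • C x) := rfl
  rw [h2]
  have h3 := (Matrix.detRowAlternating (R := ℝ) (n := Fin k)).toMultilinearMap.map_sum
    (fun i x => B i x • C x)
  simp only [AlternatingMap.coe_multilinearMap] at h3
  rw [h3]
  refine Finset.sum_congr rfl fun φ _ => ?_
  have h4 := (Matrix.detRowAlternating (R := ℝ) (n := Fin k)).toMultilinearMap.map_smul_univ
    (fun i => B i (φ i)) (fun i => C (φ i))
  simp only [AlternatingMap.coe_multilinearMap] at h4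
  rw [h4, smul_eq_mul]
  rfl

theorem cauchy_binet {k n : ℕ} (B : Matrix (Fin k) (Fin n) ℝ) (C : Matrix (Fin n) (Fin k) ℝ) :
    (B * C).det = ∑ f ∈ Finset.univ.filter (fun f : Fin k → Fin n => StrictMono f),
      (B.submatrix id f).det * (C.submatrix f id).det := by
  rw [det_mul_expand]
  have hsplit : ∑ φ : Fin k → Fin n, (∏ i, B i (φ i)) * (C.submatrix φ id).det
      = ∑ φ ∈ Finset.univ.filter (fun φ : Fin k → Fin n => Function.Injective φ),
          (∏ i, B i (φ i)) * (C.submatrix φ id).det := by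
    refine (Finset.sum_filter_of_ne fun φ _ hne => ?_).symm
    by_contra hni
    apply hne
    obtain ⟨i, j, hij, hne'⟩ : ∃ i j, φ i = φ j ∧ i ≠ j := by
      simp only [Function.Injective] at hni
      push_neg at hni
      obtain ⟨i, j, h1, h2⟩ := hni
      exact ⟨i, j, h1, h2⟩
    have : (C.submatrix φ id).det = 0 :=
      Matrix.det_zero_of_row_eq hne' (by funext x; simp [Matrix.submatrix_apply, hij])
    rw [this, mul_zero]
  rw [hsplit, sum_inj_factor]
  refine Finset.sum_congr rfl fun f hf => ?_
  have hsm : StrictMono f := by simpa using hf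
  have hperm : ∀ σ : Equiv.Perm (Fin k),
      (C.submatrix (f ∘ σ) id).det = (Equiv.Perm.sign σ : ℤ) * (C.submatrix f id).det := by
    intro σ
    have : C.submatrix (f ∘ σ) id = Matrix.of (fun i => (C.submatrix f id) (σ i)) := by
      ext i j; simp
    rw [this]
    exact Matrix.det_permute σ (C.submatrix f id)
  calc ∑ σ : Equiv.Perm (Fin k), (∏ i, B i ((f ∘ σ) i)) * (C.submatrix (f ∘ σ) id).det
      _ = (∑ σ : Equiv.Perm (Fin k), ((Equiv.Perm.sign σ : ℤ) : ℝ)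
          * ∏ i, (B.submatrix id f)ᵀ (σ i) i) * (C.submatrix f id).det := by
        rw [Finset.sum_mul]
        refine Finset.sum_congr rfl fun σ _ => ?_
        rw [hperm σ]
        have : (∏ i, B i ((f ∘ σ) i)) = ∏ i, (B.submatrix id f)ᵀ (σ i) i := by
          refine Finset.prod_congr rfl fun i _ => rfl
        rw [this]; ring
      _ = (B.submatrix id f).det * (C.submatrix f id).det := by
        rw [← Matrix.det_apply', Matrix.det_transpose]

lemma det_one_sub {k n : ℕ} {h h' : Fin k → Fin n} (hh : StrictMono h) (hh' : StrictMono h') :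
    ((1 : Matrix (Fin n) (Fin n) ℝ).submatrix h h').det = if h = h' then 1 else 0 := by
  split_ifs with heq
  · subst heq
    have : (1 : Matrix (Fin n) (Fin n) ℝ).submatrix h h = 1 := by
      ext i j
      simp [Matrix.one_apply, hh.injective.eq_iff]
    rw [this, Matrix.det_one]
  · have himg : Finset.univ.image h ≠ Finset.univ.image h' :=
      fun hc => heq (sm_unique hh hh' hc)
    have hcard : (Finset.univ.image h').card ≤ (Finset.univ.image h).card := by
      rw [Finset.card_image_of_injective _ hh.injective,
        Finset.card_image_of_injective _ hh'.injective]
    obtain ⟨a, ha, ha'⟩ : ∃ a ∈ Finset.univ.image h, a ∉ Finset.univ.image h' := by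
      by_contra hc
      push_neg at hc
      exact himg (Finset.eq_of_subset_of_card_le hc hcard)
    obtain ⟨i, -, hi⟩ := Finset.mem_image.mp ha
    apply Matrix.det_eq_zero_of_row_eq_zero i
    intro j
    simp only [Matrix.submatrix_apply, Matrix.one_apply]
    rw [if_neg]
    intro hc
    exact ha' (Finset.mem_image.mpr ⟨j, Finset.mem_univ j, (hi ▸ hc).symm⟩)

/-- Pythagoras theorem for pseudo determinants: for a symmetric matrix of rank `k`,
the square of the product of the nonzero eigenvalues equals the sum of the squares of
all `k × k` minors (rows and columns chosen as strictly increasing maps `Fin k → Fin n`,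
i.e. `k`-element subsets). -/
theorem stmt_15 {n k : ℕ} (A : Matrix (Fin n) (Fin n) ℝ)
    (hA : A.IsHermitian) (hrank : A.rank = k) :
    (∏ i ∈ Finset.univ.filter (fun i => hA.eigenvalues i ≠ 0), hA.eigenvalues i) ^ 2 =
      ∑ f : Fin k → Fin n, ∑ g : Fin k → Fin n,
        (if StrictMono f ∧ StrictMono g then (A.submatrix f g).det ^ 2 else 0) := by
  classical
  set lam := hA.eigenvalues with hlam
  set U : Matrix (Fin n) (Fin n) ℝ := (hA.eigenvectorUnitary : Matrix (Fin n) (Fin n) ℝ) with hU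
  set S : Finset (Fin k → Fin n) :=
    Finset.univ.filter (fun f : Fin k → Fin n => StrictMono f) with hS
  have hstar : star U = Uᵀ := by
    ext i j; simp [Matrix.star_apply]
  have hdiag : Matrix.diagonal ((RCLike.ofReal : ℝ → ℝ) ∘ lam) = Matrix.diagonal lam := by
    congr 1
  have hspec : A = U * Matrix.diagonal lam * Uᵀ := by
    have := hA.spectral_theorem
    rw [Unitary.conjStarAlgAut_apply, ← hU, hstar, hdiag] at this
    exact this
  have hUtU : Uᵀ * U = 1 := by
    rw [← hstar]
    exact Matrix.mem_unitaryGroup_iff'.mp (hA.eigenvectorUnitary).2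
  set u : (Fin k → Fin n) → (Fin k → Fin n) → ℝ := fun f h => (U.submatrix f h).det with hu
  set c : (Fin k → Fin n) → ℝ := fun h => ∏ i, lam (h i) with hc
  -- minor expansion
  have hminor : ∀ f g : Fin k → Fin n, (A.submatrix f g).det
      = ∑ h ∈ S, c h * (u f h * u g h) := by
    intro f g
    have h1 : A.submatrix f g
        = ((U * Matrix.diagonal lam).submatrix f id) * (Uᵀ.submatrix id g) := by
      conv_lhs => rw [hspec]
      rw [Matrix.submatrix_mul _ _ f id g Function.bijective_id]
    rw [h1, cauchy_binet]
    refine Finset.sum_congr rfl fun h hh => ?_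
    have h2 : ((U * Matrix.diagonal lam).submatrix f id).submatrix id h
        = U.submatrix f h * Matrix.diagonal (lam ∘ h) := by
      ext i j
      simp only [Matrix.submatrix_apply, Matrix.mul_diagonal, Function.comp_apply, id_eq]
    have h3 : ((Uᵀ.submatrix id g).submatrix h id) = (U.submatrix g h)ᵀ := by
      ext i j; simp
    rw [h2, h3, Matrix.det_mul, Matrix.det_diagonal, Matrix.det_transpose]
    simp only [Function.comp_apply, hu, hc]
    ring
  -- orthogonality
  have horth : ∀ h ∈ S, ∀ h' ∈ S,
      (∑ f ∈ S, u f h * u f h') = if h = h' then 1 else 0 := by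
    intro h hh h' hh'
    have hsm : StrictMono h := by simpa [hS] using hh
    have hsm' : StrictMono h' := by simpa [hS] using hh'
    have h1 : (1 : Matrix (Fin n) (Fin n) ℝ).submatrix h h'
        = (Uᵀ.submatrix h id) * (U.submatrix id h') := by
      rw [← hUtU, Matrix.submatrix_mul _ _ h id h' Function.bijective_id]
    have h2 := cauchy_binet (Uᵀ.submatrix h id) (U.submatrix id h')
    rw [← h1, det_one_sub hsm hsm'] at h2
    calc ∑ f ∈ S, u f h * u f h'
        _ = ∑ f ∈ Finset.univ.filter (fun f : Fin k → Fin n => StrictMono f),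
            ((Uᵀ.submatrix h id).submatrix id f).det
              * ((U.submatrix id h').submatrix f id).det := by
          refine Finset.sum_congr hS fun f _ => ?_
          have e1 : ((Uᵀ.submatrix h id).submatrix id f) = (U.submatrix f h)ᵀ := by
            ext i j; simp
          have e2 : ((U.submatrix id h').submatrix f id) = U.submatrix f h' := by
            ext i j; simp
          rw [e1, e2, Matrix.det_transpose]
        _ = if h = h' then 1 else 0 := h2.symm
  -- rewrite RHS as double filtered sum
  have hRHS1 : (∑ f : Fin k → Fin n, ∑ g : Fin k → Fin n,
      (if StrictMono f ∧ StrictMono g then (A.submatrix f g).det ^ 2 else 0))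
      = ∑ f ∈ S, ∑ g ∈ S, (A.submatrix f g).det ^ 2 := by
    rw [hS, Finset.sum_filter]
    refine Finset.sum_congr rfl fun f _ => ?_
    by_cases hf : StrictMono f
    · rw [if_pos hf, Finset.sum_filter]
      exact Finset.sum_congr rfl fun g _ => by simp [hf]
    · rw [if_neg hf]
      exact Finset.sum_eq_zero fun g _ => by simp [hf]
  -- main computation
  have hmain : (∑ f ∈ S, ∑ g ∈ S, (A.submatrix f g).det ^ 2) = ∑ h ∈ S, (c h) ^ 2 := by
    have step1 : (∑ f ∈ S, ∑ g ∈ S, (A.submatrix f g).det ^ 2)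
        = ∑ f ∈ S, ∑ g ∈ S, ∑ h ∈ S, ∑ h' ∈ S,
            (c h * c h') * ((u f h * u f h') * (u g h * u g h')) := by
      refine Finset.sum_congr rfl fun f _ => Finset.sum_congr rfl fun g _ => ?_
      rw [hminor f g, sq, Finset.sum_mul_sum]
      exact Finset.sum_congr rfl fun h _ => Finset.sum_congr rfl fun h' _ => by ring
    have hfact : ∀ (x y : ℝ) (h h' : Fin k → Fin n),
        (∑ f ∈ S, ∑ g ∈ S, (x * y) * ((u f h * u f h') * (u g h * u g h')))
          = (x * y) * ((∑ f ∈ S, u f h * u f h') * (∑ g ∈ S, u g h * u g h')) := by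
      intro x y h h'
      rw [Finset.sum_mul_sum, Finset.mul_sum]
      refine Finset.sum_congr rfl fun f _ => ?_
      rw [Finset.mul_sum]
    have step2 : (∑ f ∈ S, ∑ g ∈ S, ∑ h ∈ S, ∑ h' ∈ S,
            (c h * c h') * ((u f h * u f h') * (u g h * u g h')))
        = ∑ h ∈ S, ∑ h' ∈ S, ∑ f ∈ S, ∑ g ∈ S,
            (c h * c h') * ((u f h * u f h') * (u g h * u g h')) := by
      calc ∑ f ∈ S, ∑ g ∈ S, ∑ h ∈ S, ∑ h' ∈ S,
              (c h * c h') * ((u f h * u f h') * (u g h * u g h'))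
          _ = ∑ p ∈ S ×ˢ S, ∑ q ∈ S ×ˢ S,
              (c q.1 * c q.2) * ((u p.1 q.1 * u p.1 q.2) * (u p.2 q.1 * u p.2 q.2)) := by
            rw [← Finset.sum_product']
            exact Finset.sum_congr rfl fun p _ => by rw [← Finset.sum_product']
          _ = ∑ q ∈ S ×ˢ S, ∑ p ∈ S ×ˢ S,
              (c q.1 * c q.2) * ((u p.1 q.1 * u p.1 q.2) * (u p.2 q.1 * u p.2 q.2)) :=
            Finset.sum_comm
          _ = ∑ h ∈ S, ∑ h' ∈ S, ∑ f ∈ S, ∑ g ∈ S,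
              (c h * c h') * ((u f h * u f h') * (u g h * u g h')) := by
            rw [Finset.sum_product]
            exact Finset.sum_congr rfl fun h _ => Finset.sum_congr rfl fun h' _ => by
              rw [Finset.sum_product]
    have step3 : (∑ h ∈ S, ∑ h' ∈ S, ∑ f ∈ S, ∑ g ∈ S,
            (c h * c h') * ((u f h * u f h') * (u g h * u g h')))
        = ∑ h ∈ S, (c h) ^ 2 := by
      refine Finset.sum_congr rfl fun h hh => ?_
      have hzero : ∀ h' ∈ S, h' ≠ h →
          (∑ f ∈ S, ∑ g ∈ S, (c h * c h') * ((u f h * u f h') * (u g h * u g h'))) = 0 := by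
        intro h' hh' hne
        rw [hfact, horth h hh h' hh', if_neg (fun e => hne e.symm)]
        ring
      rw [Finset.sum_eq_single_of_mem h hh hzero, hfact, horth h hh h hh, if_pos rfl]
      ring
    rw [step1, step2, step3]
  rw [hRHS1, hmain]
  -- finally compute the LHS
  set T : Finset (Fin n) := Finset.univ.filter (fun i => lam i ≠ 0) with hT
  have hcard : T.card = k := by
    have h1 := hA.rank_eq_card_non_zero_eigs
    rw [hrank] at h1
    rw [hT, ← Fintype.card_subtype]
    exact h1.symm
  set h₀ : Fin k → Fin n := ⇑(T.orderEmbOfFin hcard) with hh₀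
  have hsm₀ : StrictMono h₀ := (T.orderEmbOfFin hcard).strictMono
  have hmem₀ : h₀ ∈ S := by simp [hS, hsm₀]
  have himg₀ : Finset.univ.image h₀ = T := by
    apply Finset.coe_injective
    rw [Finset.coe_image, Finset.coe_univ, Set.image_univ, hh₀]
    exact Finset.range_orderEmbOfFin T hcard
  rw [Finset.sum_eq_single_of_mem h₀ hmem₀]
  · have : (∏ i ∈ T, lam i) = c h₀ := by
      rw [← himg₀, Finset.prod_image (fun a _ b _ hab => hsm₀.injective hab)]
    rw [this]
  · intro h hh hne
    have hsm : StrictMono h := by simpa [hS] using hh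
    by_cases hz : ∀ i, lam (h i) ≠ 0
    · exfalso
      apply hne
      have hsub : Finset.univ.image h ⊆ T := by
        intro a ha
        obtain ⟨i, -, hi⟩ := Finset.mem_image.mp ha
        rw [hT, Finset.mem_filter]
        exact ⟨Finset.mem_univ a, hi ▸ hz i⟩
      have hc2 : T.card ≤ (Finset.univ.image h).card := by
        rw [Finset.card_image_of_injective _ hsm.injective, Finset.card_univ,
          Fintype.card_fin, hcard]
      have himg : Finset.univ.image h = T := Finset.eq_of_subset_of_card_le hsub hc2
      exact sm_unique hsm hsm₀ (himg.trans himg₀.symm)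
    · push_neg at hz
      obtain ⟨i, hi⟩ := hz
      have : c h = 0 := Finset.prod_eq_zero (Finset.mem_univ i) hi
      rw [this]
      ring
end
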